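/- Let a, g : ℝ → ℝ be continuous with g ≥ r > 0 and a(t) ≤ 0 on [T, ∞). Then every solution of u̇ = −(2n−1) a(t) u + (2n−1) g(t) with u(T) > 0 stays positive and satisfies u(t) ≥ u(T) + (2n−1) r (t − T) → +∞; consequently every positive solution x = u^{−1/(2n−1)} of ẋ = a(t) x − g(t) x^{2n} tends to 0 as t → +∞. -/

import Mathlib

open Filter

theorem stmt14 (a g : ℝ → ℝ) (ha : Continuous a) (hg : Continuous g)
    (T r : ℝ) (hr : 0 < r) (hgb : ∀ t, T ≤ t → r ≤ g t) (hab : ∀ t, T ≤ t → a t ≤ 0)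
    (n : ℕ) (hn : 1 ≤ n) (u : ℝ → ℝ)
    (hu : ∀ t, T ≤ t → HasDerivAt u (-(2 * (n : ℝ) - 1) * a t * u t + (2 * (n : ℝ) - 1) * g t) t)
    (huT : 0 < u T) :
    (∀ t, T ≤ t → 0 < u t ∧ u T + (2 * (n : ℝ) - 1) * r * (t - T) ≤ u t) ∧
    Tendsto u atTop atTop ∧
    Tendsto (fun t => u t ^ (-(1 : ℝ) / (2 * n - 1))) atTop (nhds 0) := by
  have hn' : (1 : ℝ) ≤ (n : ℝ) := by exact_mod_cast hn
  set c : ℝ := 2 * (n : ℝ) - 1 with hc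
  have hcpos : 0 < c := by rw [hc]; linarith
  have hcont : ContinuousOn u (Set.Ici T) := fun t ht =>
    ((hu t ht).continuousAt).continuousWithinAt
  -- positivity of u on [T, ∞)
  have pos : ∀ t, T ≤ t → 0 < u t := by
    intro t ht
    by_contra hle
    push_neg at hle
    have hSeq : {s | s ∈ Set.Icc T t ∧ u s ≤ 0} = Set.Icc T t ∩ u ⁻¹' Set.Iic 0 := by
      ext s; simp [Set.mem_Icc, and_assoc]
    have hSclosed : IsClosed {s | s ∈ Set.Icc T t ∧ u s ≤ 0} := by
      rw [hSeq]
      exact (hcont.mono (Set.Icc_subset_Ici_self)).preimage_isClosed_of_isClosed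
        isClosed_Icc isClosed_Iic
    have hSne : Set.Nonempty {s | s ∈ Set.Icc T t ∧ u s ≤ 0} := ⟨t, ⟨⟨ht, le_rfl⟩, hle⟩⟩
    have hSbdd : BddBelow {s | s ∈ Set.Icc T t ∧ u s ≤ 0} := ⟨T, fun s hs => hs.1.1⟩
    set t₀ := sInf {s | s ∈ Set.Icc T t ∧ u s ≤ 0} with ht₀
    have ht0mem : t₀ ∈ {s | s ∈ Set.Icc T t ∧ u s ≤ 0} := hSclosed.csInf_mem hSne hSbdd
    have hTt0 : T ≤ t₀ := ht0mem.1.1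
    have hupos : ∀ s, T ≤ s → s < t₀ → 0 < u s := by
      intro s hs hst
      by_contra h
      push_neg at h
      have : t₀ ≤ s := csInf_le hSbdd ⟨⟨hs, le_trans hst.le ht0mem.1.2⟩, h⟩
      linarith
    have hmono : MonotoneOn u (Set.Icc T t₀) := by
      apply monotoneOn_of_deriv_nonneg (convex_Icc T t₀)
        (hcont.mono (Set.Icc_subset_Ici_self))
      · rw [interior_Icc]
        intro x hx
        exact ((hu x hx.1.le).differentiableAt).differentiableWithinAt
      · rw [interior_Icc]
        intro x hx
        rw [(hu x hx.1.le).deriv]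
        have h1 : 0 < u x := hupos x hx.1.le hx.2
        have h2 : a x ≤ 0 := hab x hx.1.le
        have h3 : r ≤ g x := hgb x hx.1.le
        nlinarith [mul_nonneg (mul_nonneg hcpos.le (neg_nonneg.2 h2)) h1.le,
          mul_le_mul_of_nonneg_left h3 hcpos.le]
    have := hmono ⟨le_rfl, hTt0⟩ ⟨hTt0, le_rfl⟩ hTt0
    have := ht0mem.2
    linarith
  -- linear lower bound
  have hlin : ∀ t, T ≤ t → u T + c * r * (t - T) ≤ u t := by
    intro t ht
    have hmono : MonotoneOn (fun s => u s - c * r * s) (Set.Ici T) := by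
      apply monotoneOn_of_deriv_nonneg (convex_Ici T)
        (hcont.sub ((continuous_const.mul continuous_id).continuousOn))
      · rw [interior_Ici]
        intro x hx
        exact (((hu x hx.le).sub (((hasDerivAt_id x).const_mul (c * r)))).differentiableAt).differentiableWithinAt
      · rw [interior_Ici]
        intro x hx
        have hd := (hu x hx.le).sub ((hasDerivAt_id x).const_mul (c * r))
        rw [show deriv (u - (fun x => c * r) * id) x = _ from hd.deriv]
        have h1 : 0 < u x := pos x hx.le
        have h2 : a x ≤ 0 := hab x hx.le
        have h3 : r ≤ g x := hgb x hx.le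
        nlinarith [mul_nonneg (mul_nonneg hcpos.le (neg_nonneg.2 h2)) h1.le,
          mul_le_mul_of_nonneg_left h3 hcpos.le]
    have := hmono Set.self_mem_Ici ht ht
    simp only at this
    linarith
  have hbd : ∀ t, T ≤ t → 0 < u t ∧ u T + c * r * (t - T) ≤ u t :=
    fun t ht => ⟨pos t ht, hlin t ht⟩
  have htop : Tendsto u atTop atTop := by
    apply tendsto_atTop_mono' atTop (f₁ := fun t => u T + c * r * (t - T))
    · filter_upwards [eventually_ge_atTop T] with t ht using hlin t ht
    · apply tendsto_atTop_add_const_left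
      exact (tendsto_atTop_add_const_right atTop (-T) tendsto_id).const_mul_atTop
        (by positivity)
  refine ⟨hbd, htop, ?_⟩
  have hy : (0 : ℝ) < 1 / c := by positivity
  have := (tendsto_rpow_neg_atTop hy).comp htop
  convert this using 2 with t
  rw [Function.comp_apply, neg_div, hc]
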